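/- The limit of q'(s) as s → ∞ is 0. -/

import Mathlib

open MeasureTheory Filter Real

theorem stmt_4 (a μ A : ℝ) (ha : 0 < a) (hμ : 1 / 3 < μ) (hA : 0 < A)
    (q : ℝ → ℝ) (hq : ContDiff ℝ 2 q)
    (hode : ∀ s : ℝ, deriv (deriv q) s * q s + a * s * deriv q s * q s
      + μ * q s + (1 / 3) * s * deriv q s = 0)
    (hq0 : q 0 = A) (hq0' : deriv q 0 = 0)
    (hpos : ∀ s : ℝ, 0 < q s) :
    Tendsto (deriv q) atTop (nhds 0) := by
  have hμ0 : 0 < μ := lt_trans (by norm_num) hμ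
  have hqne : ∀ s, q s ≠ 0 := fun s => (hpos s).ne'
  rw [show (2 : WithTop ℕ∞) = 1 + 1 from rfl, contDiff_succ_iff_deriv] at hq
  obtain ⟨hdq, -, hq1⟩ := hq
  have hdq' : Differentiable ℝ (deriv q) := (contDiff_one_iff_deriv.mp hq1).1
  have hcq : Continuous q := hdq.continuous
  have hcq' : Continuous (deriv q) := hdq'.continuous
  set p : ℝ → ℝ := fun s => a * s + 1 / 3 * s / q s with hp_def
  have hpcont : Continuous p := by
    apply Continuous.add (continuous_const.mul continuous_id)
    exact (continuous_const.mul continuous_id).div hcq hqne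
  -- second derivative formula
  have hq'' : ∀ s, deriv (deriv q) s = -(p s * deriv q s) - μ := by
    intro s
    have hne := hqne s
    have h := hode s
    apply mul_right_cancel₀ hne
    rw [hp_def]
    field_simp
    linear_combination 3 * h
  -- integrating factor: q' < 0 on (0, ∞)
  set P : ℝ → ℝ := fun s => ∫ t in (0:ℝ)..s, p t with hP_def
  have hPd : ∀ s, HasDerivAt P (p s) s := fun s =>
    intervalIntegral.integral_hasDerivAt_right (hpcont.intervalIntegrable 0 s)
      hpcont.stronglyMeasurable.stronglyMeasurableAtFilter hpcont.continuousAt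
  set g : ℝ → ℝ := fun s => deriv q s * Real.exp (P s) with hg_def
  have hgd : ∀ s, HasDerivAt g (-μ * Real.exp (P s)) s := by
    intro s
    have h1 : HasDerivAt (deriv q) (deriv (deriv q) s) s := (hdq' s).hasDerivAt
    have h2 : HasDerivAt (fun t => Real.exp (P t)) (Real.exp (P s) * p s) s :=
      (Real.hasDerivAt_exp (P s)).comp s (hPd s)
    have h3 := h1.mul h2
    refine h3.congr_deriv ?_
    rw [hq'' s]; ring
  have hganti : StrictAnti g := by
    apply strictAnti_of_deriv_neg
    intro s
    rw [(hgd s).deriv]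
    have := Real.exp_pos (P s)
    nlinarith
  have hg0 : g 0 = 0 := by simp [hg_def, hq0']
  have hq'neg : ∀ s, 0 < s → deriv q s < 0 := by
    intro s hs
    have h1 : g s < g 0 := hganti hs
    rw [hg0] at h1
    have h1' : deriv q s * Real.exp (P s) < 0 := h1
    have h2 := Real.exp_pos (P s)
    nlinarith [h1', h2]
  -- energy
  set E : ℝ → ℝ := fun s => (deriv q s) ^ 2 / 2 + μ * q s with hE_def
  have hEd : ∀ s, HasDerivAt E (-(s * (deriv q s) ^ 2 * (a + 1 / (3 * q s)))) s := by
    intro s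
    have h1 : HasDerivAt (fun t => (deriv q t) ^ 2 / 2)
        ((2 : ℕ) * deriv q s ^ 1 * deriv (deriv q) s / 2) s :=
      ((hdq' s).hasDerivAt.pow 2).div_const 2
    have h2 : HasDerivAt (fun t => μ * q t) (μ * deriv q s) s :=
      ((hdq s).hasDerivAt.const_mul μ)
    have h3 := h1.add h2
    refine h3.congr_deriv ?_
    rw [hq'' s, hp_def]
    have hne := hqne s
    field_simp
    ring
  have hEanti : AntitoneOn E (Set.Ici 0) := by
    apply antitoneOn_of_deriv_nonpos (convex_Ici 0)
    · exact Continuous.continuousOn (by fun_prop)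
    · intro s _
      exact (hEd s).differentiableAt.differentiableWithinAt
    · intro s hs
      rw [interior_Ici] at hs
      rw [(hEd s).deriv]
      have h1 : (0:ℝ) < s := hs
      have h2 := sq_nonneg (deriv q s)
      have h0 : 0 < q s := hpos s
      have h3 : 0 < a + 1 / (3 * q s) := by
        have : 0 < 1 / (3 * q s) := one_div_pos.mpr (by linarith)
        linarith
      nlinarith [mul_nonneg (mul_nonneg h1.le h2) h3.le]
  have hqanti : AntitoneOn q (Set.Ici 0) := by
    apply antitoneOn_of_deriv_nonpos (convex_Ici 0)
    · exact hcq.continuousOn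
    · exact hdq.differentiableOn
    · intro s hs
      rw [interior_Ici] at hs
      exact (hq'neg s hs).le
  -- limits of q and E
  have hmaxmem : ∀ s : ℝ, max s 0 ∈ Set.Ici (0:ℝ) := fun s => Set.mem_Ici.mpr (le_max_right s 0)
  have hqm : Antitone (fun s => q (max s 0)) := fun s t hst =>
    hqanti (hmaxmem s) (hmaxmem t) (max_le_max hst le_rfl)
  have hqmb : BddBelow (Set.range fun s => q (max s 0)) :=
    ⟨0, fun x ⟨s, hs⟩ => hs ▸ (hpos _).le⟩
  have hEm : Antitone (fun s => E (max s 0)) := fun s t hst =>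
    hEanti (hmaxmem s) (hmaxmem t) (max_le_max hst le_rfl)
  have hEmb : BddBelow (Set.range fun s => E (max s 0)) := by
    refine ⟨0, fun x ⟨s, hs⟩ => ?_⟩
    rw [← hs, hE_def]
    have := sq_nonneg (deriv q (max s 0))
    have := hpos (max s 0)
    positivity
  have heq : ∀ᶠ s in (atTop : Filter ℝ), max s 0 = s := by
    filter_upwards [eventually_ge_atTop (0:ℝ)] with s hs
    exact max_eq_left hs
  have hqlim : Tendsto q atTop (nhds (⨅ s, q (max s 0))) := by
    refine Tendsto.congr' ?_ (tendsto_atTop_ciInf hqm hqmb)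
    filter_upwards [heq] with s hs
    rw [hs]
  have hElim : Tendsto E atTop (nhds (⨅ s, E (max s 0))) := by
    refine Tendsto.congr' ?_ (tendsto_atTop_ciInf hEm hEmb)
    filter_upwards [heq] with s hs
    rw [hs]
  set L := ⨅ s, q (max s 0)
  set M := ⨅ s, E (max s 0)
  set c := 2 * (M - μ * L) with hc_def
  have hsqlim : Tendsto (fun s => (deriv q s) ^ 2) atTop (nhds c) := by
    have h1 : Tendsto (fun s => 2 * (E s - μ * q s)) atTop (nhds c) := by
      exact ((hElim.sub (hqlim.const_mul μ)).const_mul 2)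
    refine h1.congr fun s => ?_
    rw [hE_def]; ring
  have hq'lim : Tendsto (deriv q) atTop (nhds (-Real.sqrt c)) := by
    have h1 : Tendsto (fun s => -Real.sqrt ((deriv q s) ^ 2)) atTop (nhds (-Real.sqrt c)) :=
      ((Real.continuous_sqrt.tendsto c).comp hsqlim).neg
    refine Tendsto.congr' ?_ h1
    filter_upwards [eventually_gt_atTop (0:ℝ)] with s hs
    rw [Real.sqrt_sq_eq_abs, abs_of_neg (hq'neg s hs), neg_neg]
  -- the limit must be zero
  have hk0 : Real.sqrt c = 0 := by
    by_contra hk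
    have hkpos : 0 < Real.sqrt c := (Real.sqrt_nonneg c).lt_of_ne (Ne.symm hk)
    set k := Real.sqrt c with hk_def
    obtain ⟨s₀, hs₀⟩ := eventually_atTop.mp
      (hq'lim.eventually_lt_const (show -k < -(k/2) by linarith))
    have hfanti : AntitoneOn (fun s => q s + k / 2 * s) (Set.Ici s₀) := by
      apply antitoneOn_of_deriv_nonpos (convex_Ici s₀)
      · exact Continuous.continuousOn (by fun_prop)
      · intro s _
        exact ((hdq s).add ((differentiable_id.const_mul (k/2)) s)).differentiableWithinAt
      · intro s hs
        rw [interior_Ici] at hs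
        have hds : HasDerivAt (fun s => q s + k / 2 * s) (deriv q s + k / 2) s := by
          exact ((hdq s).hasDerivAt.add ((hasDerivAt_id s).const_mul (k/2))).congr_deriv (by ring)
        rw [hds.deriv]
        have := hs₀ s (le_of_lt hs)
        linarith
    set t := s₀ + (2 / k) * q s₀ + 1 with ht_def
    have hts : s₀ ≤ t := by
      have h1 : 0 < (2 / k) * q s₀ := mul_pos (div_pos two_pos hkpos) (hpos s₀)
      rw [ht_def]; linarith [hpos s₀]
    have h2 := hfanti Set.self_mem_Ici (Set.mem_Ici.mpr hts) hts
    have h3 : k / 2 * (t - s₀) = q s₀ + k / 2 := by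
      rw [ht_def]
      field_simp
      ring
    have h4 := hpos t
    simp only at h2
    nlinarith
  rw [show (0:ℝ) = -Real.sqrt c by rw [hk0, neg_zero]]
  exact hq'lim
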